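/- Let (S,Σ) be a scaled Cu-semigroup such that S satisfies axiom (O6), and assume that (S,Σ) has property (C_n) for some n ≥ 1, i.e. x ≤ n·y for all x, y ∈ Σ with y ≠ 0. Then S is simple: the only ideals of S are {0} and S. -/

import Mathlib

/-!
STATEMENT 17: Let (S,Σ) be a scaled Cu-semigroup such that S satisfies axiom (O6),
and assume that (S,Σ) has property (C_n) for some n ≥ 1, i.e. x ≤ n·y for all
x, y ∈ Σ with y ≠ 0.  Then S is simple: the only ideals of S are {0} and S.
-/

universe u v w

/-- `x` is *way below* `y` (sequential compact containment `x ≪ y`). -/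
def WayBelow {M : Type u} [Preorder M] (x y : M) : Prop :=
  ∀ s : ℕ → M, Monotone s → ∀ a : M, IsLUB (Set.range s) a → y ≤ a → ∃ n, x ≤ s n

theorem WayBelow.le {M : Type u} [Preorder M] {x y : M} (h : WayBelow x y) : x ≤ y := by
  obtain ⟨n, hn⟩ := h (fun _ => y) monotone_const y (by simp [Set.range_const]) le_rfl
  exact hn

theorem WayBelow.mono {M : Type u} [Preorder M] {x' x y y' : M} (h : WayBelow x y)
    (hx : x' ≤ x) (hy : y ≤ y') : WayBelow x' y' := fun s hs a ha hya => by
  obtain ⟨n, hn⟩ := h s hs a ha (hy.trans hya)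
  exact ⟨n, hx.trans hn⟩

theorem WayBelow.trans {M : Type u} [Preorder M] {x y z : M} (h : WayBelow x y)
    (h' : WayBelow y z) : WayBelow x z := h'.mono h.le le_rfl

/-- A map preserves suprema of increasing sequences. -/
def PreservesSeqSup {M : Type u} {N : Type v} [Preorder M] [Preorder N] (f : M → N) : Prop :=
  ∀ s : ℕ → M, Monotone s → ∀ a : M, IsLUB (Set.range s) a →
    IsLUB (Set.range fun n => f (s n)) (f a)

/-- Axiom (O1): every increasing sequence has a supremum. -/
def SeqSupExists (M : Type u) [Preorder M] : Prop :=
  ∀ s : ℕ → M, Monotone s → ∃ a : M, IsLUB (Set.range s) a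

/-- Axiom (O4): suprema of increasing sequences are additive. -/
def SeqSupAdditive (M : Type u) [AddCommMonoid M] [Preorder M] : Prop :=
  ∀ s t : ℕ → M, Monotone s → Monotone t → ∀ a b : M,
    IsLUB (Set.range s) a → IsLUB (Set.range t) b →
    IsLUB (Set.range fun n => s n + t n) (a + b)

/-- The axioms of a positively ordered monoid: the partial order is translation
invariant and `0` is the least element. -/
structure PoMAxioms (M : Type u) [AddCommMonoid M] [PartialOrder M] : Prop where
  add_le_add_left : ∀ a b : M, a ≤ b → ∀ c : M, c + a ≤ c + b
  zero_le : ∀ a : M, 0 ≤ a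

/-- A `PoM`-morphism: preserves addition, order and `0`. -/
structure IsPoMHom {M : Type u} {N : Type v} [AddCommMonoid M] [PartialOrder M]
    [AddCommMonoid N] [PartialOrder N] (f : M → N) : Prop where
  map_zero : f 0 = 0
  map_add : ∀ x y : M, f (x + y) = f x + f y
  mono : Monotone f

/-- The axioms of an abstract Cuntz semigroup (`Cu`-semigroup). -/
structure CuAxioms (M : Type u) [AddCommMonoid M] [PartialOrder M] extends PoMAxioms M : Prop where
  O1 : SeqSupExists M
  O2 : ∀ x : M, ∃ s : ℕ → M, (∀ n, WayBelow (s n) (s (n + 1))) ∧ IsLUB (Set.range s) x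
  O3 : ∀ x' x y' y : M, WayBelow x' x → WayBelow y' y → WayBelow (x' + y') (x + y)
  O4 : SeqSupAdditive M

/-- A `Cu`-morphism: preserves addition, order, `0`, way-below, and suprema of
increasing sequences. -/
structure IsCuHom {M : Type u} {N : Type v} [AddCommMonoid M] [PartialOrder M]
    [AddCommMonoid N] [PartialOrder N] (f : M → N) extends IsPoMHom f : Prop where
  map_wayBelow : ∀ x y : M, WayBelow x y → WayBelow (f x) (f y)
  map_seqSup : PreservesSeqSup f

/-- An ideal of a `Cu`-semigroup: a downward hereditary submonoid that is closed
under suprema of increasing sequences. -/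
structure IsCuIdeal {M : Type u} [AddCommMonoid M] [PartialOrder M] (I : Set M) : Prop where
  zero_mem : (0 : M) ∈ I
  add_mem : ∀ x y : M, x ∈ I → y ∈ I → x + y ∈ I
  lower : ∀ x y : M, x ≤ y → y ∈ I → x ∈ I
  seqSup_mem : ∀ s : ℕ → M, Monotone s → (∀ n, s n ∈ I) → ∀ a : M, IsLUB (Set.range s) a → a ∈ I

/-- Axiom (O6) (almost algebraic order). -/
def O6ax (M : Type u) [AddCommMonoid M] [PartialOrder M] : Prop :=
  ∀ x' x y z : M, WayBelow x' x → x ≤ y + z →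
    ∃ e f : M, e ≤ x ∧ e ≤ y ∧ f ≤ x ∧ f ≤ z ∧ x' ≤ e + f

/-- A scale on a Cu-semigroup: a downward hereditary subset, closed under suprema of
increasing sequences, generating the semigroup as an ideal. -/
structure IsScale {M : Type u} [AddCommMonoid M] [PartialOrder M] (A : Set M) : Prop where
  lower : ∀ x y : M, x ≤ y → y ∈ A → x ∈ A
  seqSup_mem : ∀ s : ℕ → M, Monotone s → (∀ n, s n ∈ A) → ∀ a : M, IsLUB (Set.range s) a → a ∈ A
  generates : ∀ I : Set M, IsCuIdeal I → A ⊆ I → I = Set.univ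

/-- **Lemma: (C_n) together with (O6) implies simplicity.**  If the scaled
Cu-semigroup `(M, A)` satisfies (O6) and has property (C_n) for some `n ≥ 1`, then
`M` is simple: its only ideals are `{0}` and `M`. -/
theorem simple_of_propCn {M : Type u} [AddCommMonoid M] [PartialOrder M]
    (hM : CuAxioms M) (A : Set M) (hA : IsScale A) (hO6 : O6ax M)
    (n : ℕ) (hn : 1 ≤ n) (hC : ∀ x ∈ A, ∀ y ∈ A, y ≠ 0 → x ≤ n • y) :
    ∀ I : Set M, IsCuIdeal I → I = {0} ∨ I = Set.univ := by

  intro I hI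
  by_cases h0 : ∀ y ∈ I, y = 0
  · left
    ext z
    simp only [Set.mem_singleton_iff]
    exact ⟨fun hz => h0 z hz, fun hz => hz ▸ hI.zero_mem⟩
  · right
    push_neg at h0
    obtain ⟨y, hyI, hy0⟩ := h0
    -- addition is monotone in both variables
    have addle : ∀ a b c d : M, a ≤ b → c ≤ d → a + c ≤ b + d := by
      intro a b c d h1 h2
      refine le_trans ?_ (hM.add_le_add_left c d h2 b)
      rw [add_comm a c, add_comm b c]
      exact hM.add_le_add_left a b h1 c
    -- every nonzero element has a nonzero way-below element
    have nzwb : ∀ x : M, x ≠ 0 → ∃ x', WayBelow x' x ∧ x' ≠ 0 := by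
      intro x hx
      obtain ⟨s, hs, hsup⟩ := hM.O2 x
      by_cases hall : ∀ k, s k = 0
      · exfalso
        apply hx
        refine le_antisymm ?_ (hM.zero_le x)
        exact hsup.2 (fun b hb => by obtain ⟨k, rfl⟩ := hb; exact (hall k).le)
      · push_neg at hall
        obtain ⟨k, hk⟩ := hall
        exact ⟨s k, (hs k).mono le_rfl (hsup.1 ⟨k + 1, rfl⟩), hk⟩
    -- the ideal of elements whose way-below elements are dominated by finite sums from A
    set J : Set M :=
      {x | ∀ w, WayBelow w x → ∃ L : List M, (∀ e ∈ L, e ∈ A) ∧ w ≤ L.sum} with hJdef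
    have hJ : IsCuIdeal J := by
      constructor
      · intro w hw
        exact ⟨[], by simp, by simpa using hw.le⟩
      · intro x y hx hy w hw
        obtain ⟨s, hs, hsx⟩ := hM.O2 x
        obtain ⟨t, ht, hty⟩ := hM.O2 y
        have hms : Monotone s := monotone_nat_of_le_succ fun k => (hs k).le
        have hmt : Monotone t := monotone_nat_of_le_succ fun k => (ht k).le
        have hsum := hM.O4 s t hms hmt x y hsx hty
        obtain ⟨k, hk⟩ := hw (fun m => s m + t m)
          (fun i j hij => addle _ _ _ _ (hms hij) (hmt hij)) (x + y) hsum le_rfl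
        have hskx : WayBelow (s k) x := (hs k).mono le_rfl (hsx.1 ⟨k + 1, rfl⟩)
        have htky : WayBelow (t k) y := (ht k).mono le_rfl (hty.1 ⟨k + 1, rfl⟩)
        obtain ⟨L1, hL1, h1⟩ := hx (s k) hskx
        obtain ⟨L2, hL2, h2⟩ := hy (t k) htky
        refine ⟨L1 ++ L2, ?_, ?_⟩
        · intro e he
          rcases List.mem_append.1 he with h | h
          · exact hL1 e h
          · exact hL2 e h
        · rw [List.sum_append]
          exact hk.trans (addle _ _ _ _ h1 h2)
      · intro x y hxy hy w hw
        exact hy w (hw.mono le_rfl hxy)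
      · intro s hs hmem a ha w hw
        obtain ⟨z, hz, hza⟩ := hM.O2 a
        have hmz : Monotone z := monotone_nat_of_le_succ fun k => (hz k).le
        obtain ⟨j, hj⟩ := hw z hmz a hza le_rfl
        have h1 : WayBelow w (z (j + 1)) := (hz j).mono hj le_rfl
        obtain ⟨k, hk⟩ := hz (j + 1) s hs a ha (hza.1 ⟨j + 2, rfl⟩)
        exact hmem k w (h1.mono le_rfl hk)
    have hAJ : A ⊆ J := by
      intro a haA w hw
      exact ⟨[a], by simpa using haA, by simpa using hw.le⟩
    have hJuniv := hA.generates J hJ hAJ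
    -- extract a nonzero element of A ∩ I from a domination by a sum over A
    have extract : ∀ L : List M, (∀ e ∈ L, e ∈ A) → ∀ z, z ∈ I → z ≠ 0 → z ≤ L.sum →
        ∃ e, e ∈ A ∧ e ∈ I ∧ e ≠ 0 := by
      intro L
      induction L with
      | nil =>
        intro _ z hzI hz0 hzle
        exact absurd (le_antisymm (by simpa using hzle) (hM.zero_le z)) hz0
      | cons a L ih =>
        intro hmem z hzI hz0 hzle
        obtain ⟨z', hz'wb, hz'0⟩ := nzwb z hz0
        obtain ⟨e, f, hex, hea, hfx, hfz, hz'ef⟩ :=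
          hO6 z' z a L.sum hz'wb (by simpa using hzle)
        by_cases he0 : e = 0
        · subst he0
          have hz'f : z' ≤ f := by simpa using hz'ef
          have hf0 : f ≠ 0 := fun h => hz'0 (le_antisymm (h ▸ hz'f) (hM.zero_le z'))
          exact ih (fun e he => hmem e (List.mem_cons_of_mem a he)) f
            (hI.lower f z hfx hzI) hf0 hfz
        · exact ⟨e, hA.lower e a hea (hmem a (List.mem_cons_self (a := a) (l := L))),
            hI.lower e z hex hzI, he0⟩
    obtain ⟨y', hy'wb, hy'0⟩ := nzwb y hy0
    have hyJ : y ∈ J := by rw [hJuniv]; exact Set.mem_univ y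
    obtain ⟨L, hLA, hyL⟩ := hyJ y' hy'wb
    obtain ⟨c, hcA, hcI, hc0⟩ :=
      extract L hLA y' (hI.lower y' y hy'wb.le hyI) hy'0 hyL
    have hsmul : ∀ m : ℕ, m • c ∈ I := by
      intro m
      induction m with
      | zero => simpa using hI.zero_mem
      | succ k ihk => rw [succ_nsmul]; exact hI.add_mem _ _ ihk hcI
    have hAI : A ⊆ I := fun x hx => hI.lower x (n • c) (hC x hx c hcA hc0) (hsmul n)
    exact hA.generates I hI hAI
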